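/- Let p be an odd prime and a ∈ F_p* with (a mod p) < √p. Then h_p(1,a) = 1 + (a mod p). -/

import Mathlib

/-- The height `h_p(⟨1,a⟩) = min_{k=1}^{p-1} (k + (k·a mod p))`. -/
noncomputable def heightLine (p : ℕ) (a : ZMod p) : ℕ :=
  sInf {n | ∃ k : ℕ, 1 ≤ k ∧ k ≤ p - 1 ∧ n = k + ((k : ZMod p) * a).val}

theorem stmt_5 (p : ℕ) (hp : p.Prime) (hodd : Odd p) (a : ZMod p) (ha : a ≠ 0)
    (hsmall : (a.val : ℝ) < Real.sqrt p) :
    heightLine p a = 1 + a.val := by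
  have hp1 : 1 < p := hp.one_lt
  haveI : Fact p.Prime := ⟨hp⟩
  haveI : NeZero p := ⟨hp.ne_zero⟩
  set m := a.val with hm
  have hm1 : 1 ≤ m := by
    rcases Nat.eq_zero_or_pos m with h | h
    · exact absurd ((ZMod.val_eq_zero a).mp h) ha
    · exact h
  have hmp : m * m < p := by
    have h0 : (0:ℝ) ≤ (m:ℝ) := by positivity
    have := (Real.lt_sqrt h0).mp hsmall
    have : ((m*m : ℕ) : ℝ) < (p : ℝ) := by push_cast; nlinarith
    exact_mod_cast this
  apply le_antisymm
  · apply Nat.sInf_le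
    refine ⟨1, le_refl _, by omega, ?_⟩
    simp [hm]
  · apply le_csInf
    · exact ⟨1 + ((1 : ZMod p) * a).val, 1, le_refl _, by omega, by norm_num⟩
    · rintro n ⟨k, hk1, hk2, rfl⟩
      have hklt : k < p := by omega
      have hval : ((k : ZMod p) * a).val = (k * m) % p := by
        rw [ZMod.val_mul, ZMod.val_natCast, Nat.mod_eq_of_lt hklt]
      rw [hval]
      by_cases hcase : k * m < p
      · rw [Nat.mod_eq_of_lt hcase]
        nlinarith
      · have : m < k := by nlinarith
        have := Nat.zero_le ((k * m) % p)
        omega
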